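/- Let G_1,…,G_t be random d×n real matrices and W_1,…,W_t random n×n real matrices such that for each r, W_r is independent of (W_1,…,W_{r-1}, G_1,…,G_r), and each W_r satisfies E[W_r·W_rᵀ] = α₁I_n + (1−α₁)A_n and E[W_r·A_n·W_rᵀ] = α₂I_n + (1−α₂)A_n with 0 < α₂ < α₁ < 1; set β = α₁ − α₂. Define X = −γ·∑_{s=1}^{t} G_s·W_s·W_{s+1}⋯W_t. Then E‖ X·(I_n − A_n) ‖_F² ≤ ( γ²/(1 − √β) )·∑_{s=1}^{t} β^{(t−s)/2}·E‖ G_s·(I_n − A_n) ‖_F². -/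

import Mathlib

open MeasureTheory ProbabilityTheory Matrix Real

/-- Measurable-space structure on matrices (entrywise). -/
instance matrixMeasurableSpace {m n α : Type*} [MeasurableSpace α] :
    MeasurableSpace (Matrix m n α) := by unfold Matrix; infer_instance

/-- The `n × n` matrix `A_n = (1/n)·𝟙𝟙ᵀ` with all entries `1/n`. -/
noncomputable def stdA (n : ℕ) : Matrix (Fin n) (Fin n) ℝ := Matrix.of fun _ _ => (1 : ℝ) / n

/-- The squared Frobenius norm `‖M‖_F² = ∑_{a,b} M a b ^ 2`. -/
noncomputable def frobSq {m k : ℕ} (M : Matrix (Fin m) (Fin k) ℝ) : ℝ := ∑ a, ∑ b, M a b ^ 2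

/-- The ordered matrix product `W s ω * W (s+1) ω * ⋯ * W t ω`. -/
noncomputable def matProd {Ω : Type*} {n : ℕ} (W : ℕ → Ω → Matrix (Fin n) (Fin n) ℝ)
    (s t : ℕ) (ω : Ω) : Matrix (Fin n) (Fin n) ℝ :=
  ((List.range (t + 1 - s)).map fun k => W (s + k) ω).prod


-- P notation
noncomputable def stdP (n : ℕ) : Matrix (Fin n) (Fin n) ℝ := 1 - stdA n

lemma stdA_mul_stdA {n : ℕ} (hn : 1 ≤ n) : stdA n * stdA n = stdA n := by
  ext a b
  simp [stdA, Matrix.mul_apply, Finset.sum_const, Finset.card_univ, div_mul_div_comm]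
  have : (n:ℝ) ≠ 0 := Nat.cast_ne_zero.2 (by omega)
  field_simp


lemma stdP_transpose {n : ℕ} : (stdP n)ᵀ = stdP n := by
  ext a b; simp [stdP, stdA, Matrix.transpose_apply, Matrix.one_apply]
  by_cases h : a = b <;> simp [h]
  exact fun h' => absurd h'.symm h

lemma stdP_mul_stdP {n : ℕ} (hn : 1 ≤ n) : stdP n * stdP n = stdP n := by
  simp [stdP, Matrix.mul_sub, Matrix.sub_mul, stdA_mul_stdA hn]

lemma frobSq_eq_trace {m k : ℕ} (M : Matrix (Fin m) (Fin k) ℝ) :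
    frobSq M = ∑ a, (M * Mᵀ) a a := by
  simp [frobSq, Matrix.mul_apply, Matrix.transpose_apply, sq]

lemma frobSq_mulP {m n : ℕ} (hn : 1 ≤ n) (M : Matrix (Fin m) (Fin n) ℝ) :
    frobSq (M * stdP n) = ∑ a, (M * stdP n * Mᵀ) a a := by
  rw [frobSq_eq_trace]
  congr 1
  rw [Matrix.transpose_mul, stdP_transpose, Matrix.mul_assoc, ← Matrix.mul_assoc (stdP n),
    stdP_mul_stdP hn, ← Matrix.mul_assoc]

lemma frobSq_nonneg {m k : ℕ} (M : Matrix (Fin m) (Fin k) ℝ) : 0 ≤ frobSq M :=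
  Finset.sum_nonneg fun _ _ => Finset.sum_nonneg fun _ _ => sq_nonneg _

lemma frobSq_smul {m k : ℕ} (r : ℝ) (M : Matrix (Fin m) (Fin k) ℝ) :
    frobSq (r • M) = r ^ 2 * frobSq M := by
  simp [frobSq, Finset.mul_sum, mul_pow]

lemma measurable_entry {m k : Type*} [Fintype m] [Fintype k] (a : m) (b : k) :
    Measurable (fun M : Matrix m k ℝ => M a b) :=
  (measurable_pi_apply b).comp (measurable_pi_apply a)

lemma Measurable.matMul {Ω : Type*} [MeasurableSpace Ω] {m k l : Type*}
    [Fintype m] [Fintype k] [Fintype l]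
    {f : Ω → Matrix m k ℝ} {g : Ω → Matrix k l ℝ}
    (hf : Measurable f) (hg : Measurable g) :
    Measurable (fun ω => f ω * g ω) := by
  apply measurable_pi_lambda _ fun a => measurable_pi_lambda _ fun b => ?_
  have : (fun ω => (f ω * g ω) a b) = fun ω => ∑ c, f ω a c * g ω c b := by
    funext ω; rw [Matrix.mul_apply]
  rw [this]
  exact Finset.measurable_sum _ fun c _ =>
    (((measurable_entry a c).comp hf).mul ((measurable_entry c b).comp hg))

lemma Measurable.matTranspose {Ω : Type*} [MeasurableSpace Ω] {m k : Type*}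
    [Fintype m] [Fintype k] {f : Ω → Matrix m k ℝ} (hf : Measurable f) :
    Measurable (fun ω => (f ω)ᵀ) :=
  measurable_pi_lambda _ fun a => measurable_pi_lambda _ fun b =>
    (measurable_entry b a).comp hf

/-- L2 · L2 is integrable. -/
lemma memL2_mul_integrable {Ω : Type*} [MeasurableSpace Ω] {μ : Measure Ω}
    {f g : Ω → ℝ} (hf : MemLp f 2 μ) (hg : MemLp g 2 μ) :
    Integrable (fun ω => f ω * g ω) μ := by
  refine Integrable.mono' (((hf.integrable_sq.add hg.integrable_sq).div_const 2))
    (hf.aestronglyMeasurable.mul hg.aestronglyMeasurable) (Filter.Eventually.of_forall fun ω => ?_)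
  rw [Real.norm_eq_abs, abs_mul]
  simp only [Pi.add_apply]
  nlinarith [sq_nonneg (|f ω| - |g ω|), sq_abs (f ω), sq_abs (g ω), abs_nonneg (f ω), abs_nonneg (g ω)]

/-- entries of a product with a constant matrix on the right stay in L2 -/
lemma memL2_mul_const {Ω : Type*} [MeasurableSpace Ω] {μ : Measure Ω} {m n k : ℕ}
    {f : Ω → Matrix (Fin m) (Fin n) ℝ} (hf : ∀ a b, MemLp (fun ω => f ω a b) 2 μ)
    (M : Matrix (Fin n) (Fin k) ℝ) (a : Fin m) (b : Fin k) :
    MemLp (fun ω => (f ω * M) a b) 2 μ := by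
  have : (fun ω => (f ω * M) a b) = fun ω => ∑ c, M c b * f ω a c := by
    funext ω; rw [Matrix.mul_apply]; congr 1; funext c; ring
  rw [this, ← Finset.sum_fn]
  exact memLp_finset_sum' _ fun c _ => (hf a c).const_mul _

/-- Integrable quadratic form entries: (f * M * fᵀ) i j -/
lemma integrable_quad {Ω : Type*} [MeasurableSpace Ω] {μ : Measure Ω} {n : ℕ}
    {f : Ω → Matrix (Fin n) (Fin n) ℝ} (hf : ∀ a b, MemLp (fun ω => f ω a b) 2 μ)
    (M : Matrix (Fin n) (Fin n) ℝ) (i j : Fin n) :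
    Integrable (fun ω => (f ω * M * (f ω)ᵀ) i j) μ := by
  have : (fun ω => (f ω * M * (f ω)ᵀ) i j)
      = fun ω => ∑ e, ∑ c, M c e * (f ω i c * f ω j e) := by
    funext ω
    simp only [Matrix.mul_apply, Matrix.transpose_apply, Finset.sum_mul]
    congr 1; funext e; congr 1; funext c; ring
  rw [this]
  exact integrable_finset_sum _ fun e _ => integrable_finset_sum _ fun c _ =>
    (memL2_mul_integrable (hf i c) (hf j e)).const_mul _

lemma measurable_quad_entry {n : ℕ} (M : Matrix (Fin n) (Fin n) ℝ) (i j : Fin n) :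
    Measurable (fun X : Matrix (Fin n) (Fin n) ℝ => (X * M * Xᵀ) i j) :=
  (measurable_entry i j).comp ((measurable_id.matMul measurable_const).matMul
    measurable_id.matTranspose)

lemma quad_entry {d n : ℕ} (M : Matrix (Fin d) (Fin n) ℝ) (Q : Matrix (Fin n) (Fin n) ℝ)
    (a : Fin d) : (M * Q * Mᵀ) a a = ∑ i, ∑ j, (M a i * M a j) * Q i j := by
  simp only [Matrix.mul_apply, Matrix.transpose_apply, Finset.sum_mul]
  rw [Finset.sum_comm]
  congr 1; funext i; congr 1; funext j; ring

/-- One peeling step. -/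
lemma step_lemma {Ω : Type*} [MeasurableSpace Ω] {μ : Measure Ω} [IsProbabilityMeasure μ]
    {n d : ℕ} (hn : 1 ≤ n) {β : ℝ}
    {Y : Ω → Matrix (Fin d) (Fin n) ℝ} {Wr : Ω → Matrix (Fin n) (Fin n) ℝ}
    (hYL2 : ∀ a b, MemLp (fun ω => Y ω a b) 2 μ)
    (hWL2 : ∀ a b, MemLp (fun ω => Wr ω a b) 2 μ)
    (hind : IndepFun Wr Y μ)
    (hEW : ∀ i j, (∫ ω, (Wr ω * stdP n * (Wr ω)ᵀ) i j ∂μ) = β * stdP n i j) :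
    ∫ ω, frobSq (Y ω * Wr ω * stdP n) ∂μ = β * ∫ ω, frobSq (Y ω * stdP n) ∂μ := by
  have key : ∀ ω, frobSq (Y ω * Wr ω * stdP n)
      = ∑ a, ∑ i, ∑ j, (Y ω a i * Y ω a j) * (Wr ω * stdP n * (Wr ω)ᵀ) i j := by
    intro ω
    rw [frobSq_mulP hn]
    have : Y ω * Wr ω * stdP n * (Y ω * Wr ω)ᵀ
        = Y ω * (Wr ω * stdP n * (Wr ω)ᵀ) * (Y ω)ᵀ := by
      rw [Matrix.transpose_mul]; simp only [Matrix.mul_assoc]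
    rw [this]
    exact Finset.sum_congr rfl fun a _ => quad_entry _ _ a
  have key2 : ∀ ω, frobSq (Y ω * stdP n)
      = ∑ a, ∑ i, ∑ j, (Y ω a i * Y ω a j) * stdP n i j := by
    intro ω
    rw [frobSq_mulP hn]
    exact Finset.sum_congr rfl fun a _ => quad_entry _ _ a
  -- independence and integrability of each term
  have hindab : ∀ (a : Fin d) (i j : Fin n),
      IndepFun (fun ω => Y ω a i * Y ω a j)
        (fun ω => (Wr ω * stdP n * (Wr ω)ᵀ) i j) μ := by
    intro a i j
    exact (hind.comp (measurable_quad_entry _ i j)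
      (((measurable_entry a i).mul (measurable_entry a j)))).symm
  have hintY : ∀ (a : Fin d) (i j : Fin n),
      Integrable (fun ω => Y ω a i * Y ω a j) μ :=
    fun a i j => memL2_mul_integrable (hYL2 a i) (hYL2 a j)
  have hintterm : ∀ (a : Fin d) (i j : Fin n),
      Integrable (fun ω => (Y ω a i * Y ω a j) * (Wr ω * stdP n * (Wr ω)ᵀ) i j) μ :=
    fun a i j => (hindab a i j).integrable_mul (hintY a i j) (integrable_quad hWL2 _ i j)
  calc ∫ ω, frobSq (Y ω * Wr ω * stdP n) ∂μ
      = ∑ a, ∑ i, ∑ j, ∫ ω, (Y ω a i * Y ω a j) * (Wr ω * stdP n * (Wr ω)ᵀ) i j ∂μ := by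
        simp_rw [key]
        rw [integral_finset_sum _ fun a _ => integrable_finset_sum _ fun i _ =>
          integrable_finset_sum _ fun j _ => hintterm a i j]
        exact Finset.sum_congr rfl fun a _ => by
          rw [integral_finset_sum _ fun i _ => integrable_finset_sum _ fun j _ => hintterm a i j]
          exact Finset.sum_congr rfl fun i _ => by
            rw [integral_finset_sum _ fun j _ => hintterm a i j]
    _ = ∑ a, ∑ i, ∑ j, (∫ ω, Y ω a i * Y ω a j ∂μ) * (β * stdP n i j) := by
        refine Finset.sum_congr rfl fun a _ => Finset.sum_congr rfl fun i _ =>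
          Finset.sum_congr rfl fun j _ => ?_
        have := (hindab a i j).integral_mul_eq_mul_integral (hintY a i j).aestronglyMeasurable
          (integrable_quad hWL2 _ i j).aestronglyMeasurable
        simp only [Pi.mul_apply] at this
        rw [this, hEW i j]
    _ = β * ∑ a, ∑ i, ∑ j, ∫ ω, (Y ω a i * Y ω a j) * stdP n i j ∂μ := by
        simp_rw [Finset.mul_sum]
        refine Finset.sum_congr rfl fun a _ => Finset.sum_congr rfl fun i _ =>
          Finset.sum_congr rfl fun j _ => ?_
        rw [MeasureTheory.integral_mul_const]; ring
    _ = β * ∫ ω, frobSq (Y ω * stdP n) ∂μ := by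
        congr 1
        simp_rw [key2]
        rw [integral_finset_sum _ fun a _ => integrable_finset_sum _ fun i _ =>
          integrable_finset_sum _ fun j _ => (hintY a i j).mul_const (stdP n i j)]
        refine (Finset.sum_congr rfl fun a _ => ?_).symm
        rw [integral_finset_sum _ fun i _ => integrable_finset_sum _ fun j _ =>
          (hintY a i j).mul_const (stdP n i j)]
        refine Finset.sum_congr rfl fun i _ => ?_
        rw [integral_finset_sum _ fun j _ => (hintY a i j).mul_const (stdP n i j)]

lemma matProd_base {Ω : Type*} {n : ℕ} (W : ℕ → Ω → Matrix (Fin n) (Fin n) ℝ)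
    {s : ℕ} (hs : 1 ≤ s) (ω : Ω) : matProd W s (s - 1) ω = 1 := by
  have : s - 1 + 1 - s = 0 := by omega
  simp [matProd, this]

lemma matProd_succ {Ω : Type*} {n : ℕ} (W : ℕ → Ω → Matrix (Fin n) (Fin n) ℝ)
    {s t : ℕ} (h : s ≤ t + 1) (ω : Ω) :
    matProd W s (t + 1) ω = matProd W s t ω * W (t + 1) ω := by
  have h1 : t + 1 + 1 - s = (t + 1 - s) + 1 := by omega
  have h2 : s + (t + 1 - s) = t + 1 := by omega
  simp only [matProd, h1, List.range_succ, List.map_append, List.prod_append,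
    List.map_cons, List.map_nil, List.prod_cons, List.prod_nil, mul_one, h2]

lemma measurable_list_prod {Ω : Type*} [MeasurableSpace Ω] {n : ℕ}
    (f : ℕ → Ω → Matrix (Fin n) (Fin n) ℝ) (hf : ∀ k, Measurable (f k)) (s : ℕ) :
    ∀ m, Measurable (fun ω => ((List.range m).map fun k => f (s + k) ω).prod) := by
  intro m
  induction m with
  | zero => simpa using measurable_const
  | succ m ih =>
      have : (fun ω => ((List.range (m + 1)).map fun k => f (s + k) ω).prod)
          = fun ω => ((List.range m).map fun k => f (s + k) ω).prod * f (s + m) ω := by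
        funext ω
        simp [List.range_succ]
      rw [this]
      exact ih.matMul (hf _)

lemma measurable_matProd {Ω : Type*} [MeasurableSpace Ω] {n : ℕ}
    (W : ℕ → Ω → Matrix (Fin n) (Fin n) ℝ) (hW : ∀ k, Measurable (W k)) (s t : ℕ) :
    Measurable (matProd W s t) :=
  measurable_list_prod W hW s (t + 1 - s)

/-- Main induction: measurability, L² entries, and the integral recursion. -/
lemma main_induction {Ω : Type*} [MeasurableSpace Ω] {μ : Measure Ω} [IsProbabilityMeasure μ]
    {n d : ℕ} (hn : 1 ≤ n) (t : ℕ) {β : ℝ}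
    (W : ℕ → Ω → Matrix (Fin n) (Fin n) ℝ)
    (G : ℕ → Ω → Matrix (Fin d) (Fin n) ℝ)
    (hWmeas : ∀ r, Measurable (W r)) (hGmeas : ∀ r, Measurable (G r))
    (hWL2 : ∀ r a b, MemLp (fun ω => W r ω a b) 2 μ)
    (hGL2 : ∀ r a b, MemLp (fun ω => G r ω a b) 2 μ)
    (hindep : ∀ r ∈ Finset.Icc 1 t,
        IndepFun (W r)
          (fun ω => ((fun q : Fin (r - 1) => W ((q : ℕ) + 1) ω),
            (fun q : Fin r => G ((q : ℕ) + 1) ω))) μ)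
    (hEWP : ∀ r ∈ Finset.Icc 1 t, ∀ i j,
        (∫ ω, (W r ω * stdP n * (W r ω)ᵀ) i j ∂μ) = β * stdP n i j)
    (s : ℕ) (hs : 1 ≤ s) :
    ∀ u, s - 1 ≤ u → u ≤ t →
      (∀ a b, MemLp (fun ω => (G s ω * matProd W s u ω) a b) 2 μ) ∧
      (∫ ω, frobSq (G s ω * matProd W s u ω * stdP n) ∂μ)
        = β ^ (u + 1 - s) * ∫ ω, frobSq (G s ω * stdP n) ∂μ := by
  intro u
  induction u with
  | zero =>
      intro h1 _
      have hs1 : s = 1 := by omega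
      subst hs1
      have hmp : ∀ ω, matProd W 1 0 ω = 1 := fun ω => matProd_base W le_rfl ω
      constructor
      · intro a b
        simp only [hmp, Matrix.mul_one]
        exact hGL2 1 a b
      · simp only [hmp, Matrix.mul_one]
        norm_num
  | succ u ih =>
      intro h1 h2
      by_cases hbase : s - 1 = u + 1
      · -- base case at u+1 = s-1
        have hmp : ∀ ω, matProd W s (u + 1) ω = 1 := by
          intro ω; rw [show u + 1 = s - 1 from hbase.symm]; exact matProd_base W hs ω
        constructor
        · intro a b
          simp only [hmp, Matrix.mul_one]
          exact hGL2 s a b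
        · simp only [hmp, Matrix.mul_one]
          have : u + 1 + 1 - s = 0 := by omega
          rw [this, pow_zero, one_mul]
      · -- inductive step: s ≤ u + 1
        have hsu : s ≤ u + 1 := by omega
        have hu1 : s - 1 ≤ u := by omega
        have hut : u ≤ t := by omega
        obtain ⟨ihL2, ihInt⟩ := ih hu1 hut
        set Z : Ω → Matrix (Fin d) (Fin n) ℝ := fun ω => G s ω * matProd W s u ω with hZ
        have hZmeas : Measurable Z := (hGmeas s).matMul (measurable_matProd W hWmeas s u)
        have hmem : u + 1 ∈ Finset.Icc 1 t := Finset.mem_Icc.2 ⟨by omega, h2⟩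
        -- independence of W (u+1) from Z
        have hindZ : IndepFun (W (u + 1)) Z μ := by
          have hbig := hindep (u + 1) hmem
          -- express Z as a measurable function of the tuple
          set F : (Fin (u + 1 - 1) → Matrix (Fin n) (Fin n) ℝ) ×
              (Fin (u + 1) → Matrix (Fin d) (Fin n) ℝ) → Matrix (Fin d) (Fin n) ℝ :=
            fun p => p.2 ⟨s - 1, by omega⟩ *
              matProd (fun r _ => if h : 1 ≤ r ∧ r - 1 < u then p.1 ⟨r - 1, h.2⟩ else 1)
                s u () with hF
          have hFmeas : Measurable F := by
            apply Measurable.matMul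
            · exact (measurable_pi_apply _).comp measurable_snd
            · apply measurable_list_prod
                (fun r p => if h : 1 ≤ r ∧ r - 1 < u then
                  (p : (Fin (u + 1 - 1) → Matrix (Fin n) (Fin n) ℝ) ×
                    (Fin (u + 1) → Matrix (Fin d) (Fin n) ℝ)).1 ⟨r - 1, h.2⟩ else 1)
              intro k
              by_cases h : 1 ≤ k ∧ k - 1 < u
              · simp only [h, dif_pos]
                exact (measurable_pi_apply _).comp measurable_fst
              · simp only [h, dif_neg, not_false_iff]
                exact measurable_const
          have hcomp : Z = F ∘ (fun ω => ((fun q : Fin (u + 1 - 1) => W ((q : ℕ) + 1) ω),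
              (fun q : Fin (u + 1) => G ((q : ℕ) + 1) ω))) := by
            funext ω
            simp only [hF, Function.comp_apply, hZ]
            congr 1
            · show G s ω = G (s - 1 + 1) ω
              rw [Nat.sub_add_cancel hs]
            · show matProd W s u ω = _
              simp only [matProd]
              congr 1
              refine List.map_congr_left fun k hk => ?_
              rw [List.mem_range] at hk
              have hk1 : 1 ≤ s + k := by omega
              have hk2 : s + k - 1 < u := by omega
              simp only [hk1, hk2, and_self, dif_pos]
              exact congrArg (fun r => W r ω) (by omega : s + k = s + k - 1 + 1)
          rw [hcomp]
          exact hbig.comp measurable_id hFmeas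
        -- L² of entries of Z * W (u+1)
        have hL2' : ∀ a b, MemLp (fun ω => (Z ω * W (u + 1) ω) a b) 2 μ := by
          intro a b
          have : (fun ω => (Z ω * W (u + 1) ω) a b)
              = ∑ c : Fin n, fun ω => Z ω a c * W (u + 1) ω c b := by
            funext ω; rw [Matrix.mul_apply]; simp
          rw [this]
          refine memLp_finset_sum' _ fun c _ => ?_
          have hindc : IndepFun (fun ω => Z ω a c) (fun ω => W (u + 1) ω c b) μ :=
            (hindZ.comp (measurable_entry c b) (measurable_entry a c)).symm
          have hmeasp : AEStronglyMeasurable (fun ω => Z ω a c * W (u + 1) ω c b) μ :=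
            (((measurable_entry a c).comp hZmeas).mul
              ((measurable_entry c b).comp (hWmeas (u + 1)))).aestronglyMeasurable
          rw [memLp_two_iff_integrable_sq hmeasp]
          have : (fun ω => (Z ω a c * W (u + 1) ω c b) ^ 2)
              = fun ω => (Z ω a c) ^ 2 * (W (u + 1) ω c b) ^ 2 := by
            funext ω; ring
          rw [this]
          exact (hindc.comp (measurable_id.pow_const 2) (measurable_id.pow_const 2)).integrable_mul
            (ihL2 a c).integrable_sq (hWL2 (u + 1) c b).integrable_sq
        have hprod : ∀ ω, G s ω * matProd W s (u + 1) ω = Z ω * W (u + 1) ω := by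
          intro ω
          rw [matProd_succ W hsu ω, hZ, Matrix.mul_assoc]
        constructor
        · intro a b
          have : (fun ω => (G s ω * matProd W s (u + 1) ω) a b)
              = fun ω => (Z ω * W (u + 1) ω) a b := by funext ω; rw [hprod]
          rw [this]; exact hL2' a b
        · have heq : (∫ ω, frobSq (G s ω * matProd W s (u + 1) ω * stdP n) ∂μ)
              = ∫ ω, frobSq (Z ω * W (u + 1) ω * stdP n) ∂μ := by
            congr 1; funext ω; rw [hprod]
          rw [heq, step_lemma hn ihL2 (hWL2 (u + 1)) hindZ (hEWP (u + 1) hmem), ihInt]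
          have : u + 1 + 1 - s = (u + 1 - s) + 1 := by omega
          rw [this, pow_succ]
          ring

lemma frobSq_sum_le {m k : ℕ} {ι : Type*} (F : Finset ι)
    (M : ι → Matrix (Fin m) (Fin k) ℝ) (c : ι → ℝ) (hc : ∀ i ∈ F, 0 < c i) :
    frobSq (∑ s ∈ F, M s) ≤ (∑ s ∈ F, c s) * ∑ s ∈ F, frobSq (M s) / c s := by
  rcases F.eq_empty_or_nonempty with rfl | hne
  · simp [frobSq]
  have hcpos : 0 < ∑ s ∈ F, c s := Finset.sum_pos hc hne
  have hentry : ∀ (a : Fin m) (b : Fin k),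
      (∑ s ∈ F, M s a b) ^ 2 ≤ (∑ s ∈ F, c s) * ∑ s ∈ F, (M s a b) ^ 2 / c s := by
    intro a b
    have := Finset.sq_sum_div_le_sum_sq_div F (fun s => M s a b) hc
    calc (∑ s ∈ F, M s a b) ^ 2
        = ((∑ s ∈ F, M s a b) ^ 2 / ∑ s ∈ F, c s) * (∑ s ∈ F, c s) := by
          field_simp
      _ ≤ (∑ s ∈ F, (M s a b) ^ 2 / c s) * (∑ s ∈ F, c s) := by
          exact mul_le_mul_of_nonneg_right this hcpos.le
      _ = (∑ s ∈ F, c s) * ∑ s ∈ F, (M s a b) ^ 2 / c s := by ring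
  calc frobSq (∑ s ∈ F, M s) = ∑ a, ∑ b, (∑ s ∈ F, M s a b) ^ 2 := by
        simp [frobSq, Matrix.sum_apply]
    _ ≤ ∑ a, ∑ b, (∑ s ∈ F, c s) * ∑ s ∈ F, (M s a b) ^ 2 / c s := by
        exact Finset.sum_le_sum fun a _ => Finset.sum_le_sum fun b _ => hentry a b
    _ = (∑ s ∈ F, c s) * ∑ s ∈ F, frobSq (M s) / c s := by
        simp only [← Finset.mul_sum]
        congr 1
        have h1 : ∀ a : Fin m, ∑ b, ∑ s ∈ F, (M s a b) ^ 2 / c s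
            = ∑ s ∈ F, ∑ b, (M s a b) ^ 2 / c s := fun a => Finset.sum_comm
        simp only [h1]
        rw [Finset.sum_comm]
        refine Finset.sum_congr rfl fun s _ => ?_
        simp only [frobSq, Finset.sum_div]

lemma geom_bound {ρ : ℝ} (h0 : 0 ≤ ρ) (h1 : ρ < 1) (t : ℕ) :
    ∑ u ∈ Finset.Icc 1 t, ρ ^ (t + 1 - u) ≤ 1 / (1 - ρ) := by
  have hinj : Set.InjOn (fun u => t + 1 - u) (Finset.Icc 1 t) := by
    intro x hx y hy h
    simp only [Finset.coe_Icc, Set.mem_Icc] at hx hy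
    have h' : t + 1 - x = t + 1 - y := h
    omega
  have h2 : ∑ u ∈ Finset.Icc 1 t, ρ ^ (t + 1 - u)
      = ∑ k ∈ (Finset.Icc 1 t).image (fun u => t + 1 - u), ρ ^ k := by
    rw [Finset.sum_image fun x hx y hy h => hinj hx hy h]
  rw [h2]
  have hsub : (Finset.Icc 1 t).image (fun u => t + 1 - u) ⊆ Finset.range (t + 1) := by
    intro k hk
    simp only [Finset.mem_image, Finset.mem_Icc] at hk
    obtain ⟨u, ⟨h1u, h2u⟩, rfl⟩ := hk
    simp only [Finset.mem_range]
    show t + 1 - u < t + 1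
    omega
  calc ∑ k ∈ (Finset.Icc 1 t).image (fun u => t + 1 - u), ρ ^ k
      ≤ ∑ k ∈ Finset.range (t + 1), ρ ^ k :=
        Finset.sum_le_sum_of_subset_of_nonneg hsub fun k _ _ => pow_nonneg h0 k
    _ ≤ 1 / (1 - ρ) := by
        have hne : ρ ≠ 1 := ne_of_lt h1
        rw [geom_sum_eq hne]
        have h3 : (ρ ^ (t + 1) - 1) / (ρ - 1) = (1 - ρ ^ (t + 1)) / (1 - ρ) := by
          rw [← neg_div_neg_eq]; ring_nf
        rw [h3]
        have hp : 0 ≤ ρ ^ (t + 1) := pow_nonneg h0 _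
        apply div_le_div_of_nonneg_right ?_ (by linarith)
        linarith

/-- Let `G 1, …, G t` be random `d × n` matrices and `W 1, …, W t`
random `n × n` matrices such that each `W r` is independent of
`(W 1, …, W (r−1), G 1, …, G r)`, with `E[W r·(W r)ᵀ] = α₁I + (1−α₁)A_n` and
`E[W r·A_n·(W r)ᵀ] = α₂I + (1−α₂)A_n`, `0 < α₂ < α₁ < 1`, `β = α₁ − α₂`.  Set
`X = −γ·∑_{s=1}^t G s · W s ⋯ W t`.  Then
`E‖X·(I−A_n)‖_F² ≤ (γ²/(1−√β))·∑_{s=1}^t β^{(t−s)/2}·E‖G s·(I−A_n)‖_F²`. -/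
theorem statement14 {Ω : Type*} [MeasurableSpace Ω] {μ : Measure Ω} [IsProbabilityMeasure μ]
    {n d : ℕ} (hn : 1 ≤ n) (t : ℕ) (ht : 1 ≤ t) (γ α₁ α₂ : ℝ)
    (hα₂ : 0 < α₂) (hα₁₂ : α₂ < α₁) (hα₁ : α₁ < 1)
    (W : ℕ → Ω → Matrix (Fin n) (Fin n) ℝ)
    (G : ℕ → Ω → Matrix (Fin d) (Fin n) ℝ)
    (hWmeas : ∀ r, Measurable (W r)) (hGmeas : ∀ r, Measurable (G r))
    (hWL2 : ∀ r a b, MemLp (fun ω => W r ω a b) 2 μ)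
    (hGL2 : ∀ r a b, MemLp (fun ω => G r ω a b) 2 μ)
    (hindep : ∀ r ∈ Finset.Icc 1 t,
        IndepFun (W r)
          (fun ω => ((fun q : Fin (r - 1) => W ((q : ℕ) + 1) ω),
            (fun q : Fin r => G ((q : ℕ) + 1) ω))) μ)
    (hW1 : ∀ r ∈ Finset.Icc 1 t,
        (Matrix.of fun a b => ∫ ω, (W r ω * (W r ω)ᵀ) a b ∂μ) =
          α₁ • (1 : Matrix (Fin n) (Fin n) ℝ) + (1 - α₁) • stdA n)
    (hW2 : ∀ r ∈ Finset.Icc 1 t,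
        (Matrix.of fun a b => ∫ ω, (W r ω * stdA n * (W r ω)ᵀ) a b ∂μ) =
          α₂ • (1 : Matrix (Fin n) (Fin n) ℝ) + (1 - α₂) • stdA n)
    (X : Ω → Matrix (Fin d) (Fin n) ℝ)
    (hX : ∀ ω, X ω = -γ • ∑ s ∈ Finset.Icc 1 t, G s ω * matProd W s t ω) :
    (∫ ω, frobSq (X ω * ((1 : Matrix (Fin n) (Fin n) ℝ) - stdA n)) ∂μ) ≤
      γ ^ 2 / (1 - Real.sqrt (α₁ - α₂)) *
        ∑ s ∈ Finset.Icc 1 t, Real.sqrt (α₁ - α₂) ^ (t - s) *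
          ∫ ω, frobSq (G s ω * ((1 : Matrix (Fin n) (Fin n) ℝ) - stdA n)) ∂μ := by
  have hP : (1 : Matrix (Fin n) (Fin n) ℝ) - stdA n = stdP n := rfl
  simp only [hP]
  have hβ0 : 0 < α₁ - α₂ := sub_pos.2 hα₁₂
  have hβ1 : α₁ - α₂ < 1 := by linarith
  set ρ := Real.sqrt (α₁ - α₂) with hρ
  have hρ0 : 0 < ρ := Real.sqrt_pos.2 hβ0
  have hρ1 : ρ < 1 := by
    rw [hρ, show (1 : ℝ) = Real.sqrt 1 from (Real.sqrt_one).symm]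
    exact Real.sqrt_lt_sqrt hβ0.le hβ1
  have hρsq : ρ ^ 2 = α₁ - α₂ := Real.sq_sqrt hβ0.le
  -- expected quadratic form
  have hEWP : ∀ r ∈ Finset.Icc 1 t, ∀ i j,
      (∫ ω, (W r ω * stdP n * (W r ω)ᵀ) i j ∂μ) = (α₁ - α₂) * stdP n i j := by
    intro r hr i j
    have e1 : ∀ ω, (W r ω * stdP n * (W r ω)ᵀ) i j
        = (W r ω * (W r ω)ᵀ) i j - (W r ω * stdA n * (W r ω)ᵀ) i j := by
      intro ω
      rw [stdP, Matrix.mul_sub, Matrix.mul_one, Matrix.sub_mul, Matrix.sub_apply]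
    have i1 : Integrable (fun ω => (W r ω * (W r ω)ᵀ) i j) μ := by
      have h := integrable_quad (hWL2 r) (1 : Matrix (Fin n) (Fin n) ℝ) i j
      simpa [Matrix.mul_one] using h
    have i2 : Integrable (fun ω => (W r ω * stdA n * (W r ω)ᵀ) i j) μ :=
      integrable_quad (hWL2 r) _ i j
    have hsplit : (∫ ω, (W r ω * stdP n * (W r ω)ᵀ) i j ∂μ)
        = (∫ ω, (W r ω * (W r ω)ᵀ) i j ∂μ) - ∫ ω, (W r ω * stdA n * (W r ω)ᵀ) i j ∂μ := by
      simp_rw [e1]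
      exact integral_sub i1 i2
    have v1 := congrArg (fun M => M i j) (hW1 r hr)
    have v2 := congrArg (fun M => M i j) (hW2 r hr)
    simp only [Matrix.of_apply] at v1 v2
    rw [hsplit, v1, v2]
    by_cases h : i = j <;>
      simp [Matrix.add_apply, Matrix.smul_apply, smul_eq_mul, stdP, Matrix.sub_apply,
        stdA, Matrix.one_apply, h] <;> ring
  -- the per-term identity from the induction
  have hterm : ∀ s ∈ Finset.Icc 1 t,
      (∀ a b, MemLp (fun ω => (G s ω * matProd W s t ω) a b) 2 μ) ∧
      (∫ ω, frobSq (G s ω * matProd W s t ω * stdP n) ∂μ)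
        = (α₁ - α₂) ^ (t + 1 - s) * ∫ ω, frobSq (G s ω * stdP n) ∂μ := by
    intro s hsm
    rw [Finset.mem_Icc] at hsm
    exact main_induction hn t W G hWmeas hGmeas hWL2 hGL2 hindep hEWP s hsm.1 t
      (by omega) le_rfl
  -- decomposition of X * P
  have hXP : ∀ ω, X ω * stdP n
      = ∑ s ∈ Finset.Icc 1 t, (-γ) • (G s ω * matProd W s t ω * stdP n) := by
    intro ω
    rw [hX ω, Matrix.smul_mul, Matrix.sum_mul, Finset.smul_sum]
  set g : Ω → ℝ := fun ω => (∑ u ∈ Finset.Icc 1 t, ρ ^ (t + 1 - u)) *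
      ∑ s ∈ Finset.Icc 1 t,
        (γ ^ 2 * frobSq (G s ω * matProd W s t ω * stdP n)) / ρ ^ (t + 1 - s) with hg
  -- pointwise Cauchy–Schwarz
  have hpt : ∀ ω, frobSq (X ω * stdP n) ≤ g ω := by
    intro ω
    rw [hXP ω, hg]
    refine (frobSq_sum_le (Finset.Icc 1 t)
      (fun s => (-γ) • (G s ω * matProd W s t ω * stdP n))
      (fun s => ρ ^ (t + 1 - s)) (fun s _ => pow_pos hρ0 _)).trans (le_of_eq ?_)
    congr 1
    refine Finset.sum_congr rfl fun s _ => ?_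
    rw [frobSq_smul, neg_sq]
  -- integrability of each frobSq term
  have hfrobint : ∀ s ∈ Finset.Icc 1 t,
      Integrable (fun ω => frobSq (G s ω * matProd W s t ω * stdP n)) μ := by
    intro s hsm
    have hL2 := (hterm s hsm).1
    have heq : (fun ω => frobSq (G s ω * matProd W s t ω * stdP n))
        = fun ω => ∑ a, ∑ b, ((G s ω * matProd W s t ω * stdP n) a b) ^ 2 := by
      funext ω; rfl
    rw [heq]
    exact integrable_finset_sum _ fun a _ => integrable_finset_sum _ fun b _ =>
      (memL2_mul_const hL2 (stdP n) a b).integrable_sq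
  have hg_int : Integrable g μ := by
    rw [hg]
    exact ((integrable_finset_sum _ fun s hs =>
      (((hfrobint s hs).const_mul (γ ^ 2)).div_const _))).const_mul _
  -- the main estimate
  have hE : ∀ s, 0 ≤ ∫ ω, frobSq (G s ω * stdP n) ∂μ :=
    fun s => integral_nonneg fun ω => frobSq_nonneg _
  calc (∫ ω, frobSq (X ω * stdP n) ∂μ) ≤ ∫ ω, g ω ∂μ :=
        integral_mono_of_nonneg (Filter.Eventually.of_forall fun ω => frobSq_nonneg _)
          hg_int (Filter.Eventually.of_forall hpt)
    _ = (∑ u ∈ Finset.Icc 1 t, ρ ^ (t + 1 - u)) * ∑ s ∈ Finset.Icc 1 t,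
          (γ ^ 2 * ((α₁ - α₂) ^ (t + 1 - s) * ∫ ω, frobSq (G s ω * stdP n) ∂μ))
            / ρ ^ (t + 1 - s) := by
        rw [hg, integral_const_mul, integral_finset_sum _ fun s hs =>
          (((hfrobint s hs).const_mul (γ ^ 2)).div_const _)]
        congr 1
        refine Finset.sum_congr rfl fun s hs => ?_
        rw [integral_div, integral_const_mul, (hterm s hs).2]
    _ ≤ (1 / (1 - ρ)) * ∑ s ∈ Finset.Icc 1 t,
          γ ^ 2 * (ρ ^ (t - s) * ∫ ω, frobSq (G s ω * stdP n) ∂μ) := by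
        refine mul_le_mul (geom_bound hρ0.le hρ1 t) (Finset.sum_le_sum fun s hs => ?_)
          (Finset.sum_nonneg fun s hs => div_nonneg (mul_nonneg (sq_nonneg γ)
            (mul_nonneg (pow_nonneg hβ0.le _) (hE s))) (pow_nonneg hρ0.le _))
          (div_nonneg zero_le_one (by linarith))
        rw [Finset.mem_Icc] at hs
        have hm : t + 1 - s = (t - s) + 1 := by omega
        have hpow : (α₁ - α₂) ^ (t + 1 - s) = (ρ ^ (t + 1 - s)) ^ 2 := by
          rw [← hρsq, ← pow_mul, ← pow_mul, Nat.mul_comm]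
        have hρp : (0:ℝ) < ρ ^ (t + 1 - s) := pow_pos hρ0 _
        have key : γ ^ 2 * ((ρ ^ (t + 1 - s)) ^ 2 * (∫ ω, frobSq (G s ω * stdP n) ∂μ))
            / ρ ^ (t + 1 - s)
            = γ ^ 2 * (ρ ^ (t + 1 - s) * ∫ ω, frobSq (G s ω * stdP n) ∂μ) := by
          field_simp
        rw [hpow, key, hm, pow_succ]
        have h1 : ρ ^ (t - s) * ρ ≤ ρ ^ (t - s) := by
          nlinarith [pow_nonneg hρ0.le (t - s)]
        exact mul_le_mul_of_nonneg_left
          (mul_le_mul_of_nonneg_right h1 (hE s)) (sq_nonneg γ)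
    _ = γ ^ 2 / (1 - ρ) * ∑ s ∈ Finset.Icc 1 t,
          ρ ^ (t - s) * ∫ ω, frobSq (G s ω * stdP n) ∂μ := by
        rw [Finset.mul_sum, Finset.mul_sum]
        exact Finset.sum_congr rfl fun s _ => by ring
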